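/- arXiv:2205.02901 — 5 statements merged into one kernel-verified Lean document; each statement's English description precedes it below -/
import Mathlib

section
/- Let f : ℝⁿ → ℝⁿ be continuously differentiable and let (q,p) : [t₀,t₁] → ℝⁿ × ℝⁿ be continuously differentiable curves. Define the action S(q,p) = ∫_{t₀}^{t₁} ( ⟨p(t), q̇(t)⟩ − ⟨p(t), f(q(t))⟩ ) dt. Then the Gateaux derivative d/dε|_{ε=0} S(q+ε·δq, p+ε·δp) vanishes for every pair of continuously differentiable variations (δq, δp) : [t₀,t₁] → ℝⁿ × ℝⁿ with δq(t₀) = 0 and δq(t₁) = 0 if and only if q̇(t) = f(q(t)) and ṗ(t) = −Df(q(t))ᵀ p(t) for all t ∈ [t₀,t₁]. -/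
open scoped RealInnerProductSpace

noncomputable section

abbrev Euc (n : ℕ) : Type := EuclideanSpace ℝ (Fin n)

/-- The transpose (adjoint) `Df(q)ᵀ` of the Jacobian of `f` at `q`. -/
noncomputable def jacT {n : ℕ} (f : Euc n → Euc n) (q : Euc n) : Euc n →L[ℝ] Euc n :=
  ContinuousLinearMap.adjoint (fderiv ℝ f q)

open MeasureTheory Set Metric intervalIntegral

/-- Fundamental lemma of the calculus of variations. -/
lemma fund_lemma {n : ℕ} {t₀ t₁ : ℝ} (ht : t₀ < t₁) (g : ℝ → Euc n) (hg : Continuous g)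
    (h : ∀ δ : ℝ → Euc n, ContDiff ℝ 1 δ → δ t₀ = 0 → δ t₁ = 0 →
      (∫ t in t₀..t₁, ⟪δ t, g t⟫) = 0) :
    ∀ t ∈ Set.Icc t₀ t₁, g t = 0 := by
  have interior : ∀ s ∈ Set.Ioo t₀ t₁, g s = 0 := by
    intro s hs
    by_contra hgs
    have hc : (0:ℝ) < ⟪g s, g s⟫ := by
      rw [real_inner_self_eq_norm_mul_norm]
      exact mul_pos (norm_pos_iff.mpr hgs) (norm_pos_iff.mpr hgs)
    set c : ℝ := ⟪g s, g s⟫ with hcdef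
    have hcont : Continuous fun t => ⟪g s, g t⟫ := continuous_const.inner hg
    have hopen : IsOpen ({t | c/2 < ⟪g s, g t⟫} ∩ Set.Ioo t₀ t₁) :=
      (isOpen_lt continuous_const hcont).inter isOpen_Ioo
    have hsmem : s ∈ {t | c/2 < ⟪g s, g t⟫} ∩ Set.Ioo t₀ t₁ :=
      ⟨by simp only [Set.mem_setOf_eq]; linarith, hs⟩
    obtain ⟨r, hr, hball⟩ := Metric.isOpen_iff.mp hopen s hsmem
    let φ : ContDiffBump s := ⟨r/2, r, by positivity, by linarith⟩
    have hφ0 : ∀ t, t ∉ ball s r → φ t = 0 := fun t htb =>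
      φ.zero_of_le_dist (not_lt.mp (fun hlt => htb (mem_ball.mpr (by rwa [dist_comm] at hlt ⊢))))
    have hδ := h (fun t => φ t • g s) (φ.contDiff.smul contDiff_const)
      (by show φ t₀ • g s = 0
          rw [hφ0 t₀ (fun hmem => (hball hmem).2.1.ne rfl)]; simp)
      (by show φ t₁ • g s = 0
          rw [hφ0 t₁ (fun hmem => (hball hmem).2.2.ne' rfl)]; simp)
    have hint0 : (∫ t in t₀..t₁, φ t * ⟪g s, g t⟫) = 0 := by
      rw [← hδ]; congr 1; funext t; rw [real_inner_smul_left, real_inner_comm]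
    set h₀ : ℝ → ℝ := fun t => φ t * ⟪g s, g t⟫ with hh₀
    have h₀cont : Continuous h₀ := φ.continuous.mul hcont
    have h₀nonneg : ∀ t, 0 ≤ h₀ t := by
      intro t
      by_cases htb : t ∈ ball s r
      · exact mul_nonneg φ.nonneg (le_of_lt (lt_trans (by positivity) (hball htb).1))
      · simp [hh₀, hφ0 t htb]
    have hae : h₀ =ᵐ[volume.restrict (Set.Ioc t₀ t₁)] 0 := by
      rw [intervalIntegral.integral_of_le ht.le] at hint0
      exact (MeasureTheory.integral_eq_zero_iff_of_nonneg
        (fun t => h₀nonneg t) h₀cont.integrableOn_Ioc).mp hint0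
    have hnull : volume ({t | h₀ t ≠ 0} ∩ Set.Ioc t₀ t₁) = 0 := by
      have := hae
      rw [Filter.EventuallyEq, ae_iff, Measure.restrict_apply] at this
      · simpa using this
      · exact (h₀cont.measurable (measurableSet_singleton 0).compl)
    have hUopen : IsOpen ({t | 0 < h₀ t} ∩ Set.Ioo t₀ t₁) :=
      (isOpen_lt continuous_const h₀cont).inter isOpen_Ioo
    have hsU : s ∈ {t | 0 < h₀ t} ∩ Set.Ioo t₀ t₁ := by
      refine ⟨?_, hs⟩
      have : φ s = 1 := φ.one_of_mem_closedBall (mem_closedBall_self (by positivity))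
      simp only [Set.mem_setOf_eq, hh₀, this, one_mul]
      exact hc
    have hpos : 0 < volume ({t | 0 < h₀ t} ∩ Set.Ioo t₀ t₁) :=
      hUopen.measure_pos volume ⟨s, hsU⟩
    have hsub : ({t | 0 < h₀ t} ∩ Set.Ioo t₀ t₁) ⊆ ({t | h₀ t ≠ 0} ∩ Set.Ioc t₀ t₁) :=
      fun t ⟨h1, h2⟩ => ⟨ne_of_gt h1, Set.Ioo_subset_Ioc_self h2⟩
    exact absurd (measure_mono_null hsub hnull) (ne_of_gt hpos)
  intro t htmem
  have hclos : Set.Icc t₀ t₁ = closure (Set.Ioo t₀ t₁) := (closure_Ioo ht.ne).symm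
  have := Set.EqOn.closure (fun s hs => interior s hs : Set.EqOn g 0 (Set.Ioo t₀ t₁)) hg
    continuous_const
  rw [hclos] at htmem
  exact this htmem

set_option maxHeartbeats 1000000 in
/-- Differentiation of the action under the integral sign. -/
lemma action_hasDerivAt {n : ℕ} (f : Euc n → Euc n) (hf : ContDiff ℝ 1 f)
    (t₀ t₁ : ℝ) (q p δq δp : ℝ → Euc n)
    (hq : ContDiff ℝ 1 q) (hp : ContDiff ℝ 1 p)
    (hδq : ContDiff ℝ 1 δq) (hδp : ContDiff ℝ 1 δp) :
    HasDerivAt (fun ε : ℝ =>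
      ∫ t in t₀..t₁,
        (⟪p t + ε • δp t, deriv q t + ε • deriv δq t⟫
          - ⟪p t + ε • δp t, f (q t + ε • δq t)⟫))
      (∫ t in t₀..t₁,
        ((⟪p t, deriv δq t⟫ + ⟪δp t, deriv q t⟫)
          - (⟪p t, fderiv ℝ f (q t) (δq t)⟫ + ⟪δp t, f (q t)⟫))) 0 := by
  have hq' : Continuous (deriv q) := hq.continuous_deriv le_rfl
  have hδq' : Continuous (deriv δq) := hδq.continuous_deriv le_rfl
  have hfc : Continuous f := hf.continuous
  have hfd : Continuous (fderiv ℝ f) := hf.continuous_fderiv one_ne_zero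
  set F : ℝ → ℝ → ℝ := fun x t =>
    ⟪p t + x • δp t, deriv q t + x • deriv δq t⟫ - ⟪p t + x • δp t, f (q t + x • δq t)⟫ with hF
  set F' : ℝ → ℝ → ℝ := fun x t =>
    (⟪p t + x • δp t, deriv δq t⟫ + ⟪δp t, deriv q t + x • deriv δq t⟫)
      - (⟪p t + x • δp t, fderiv ℝ f (q t + x • δq t) (δq t)⟫ + ⟪δp t, f (q t + x • δq t)⟫)
    with hF'
  have hderiv : ∀ (t x : ℝ), HasDerivAt (fun y => F y t) (F' x t) x := by
    intro t x
    have hA : HasDerivAt (fun y : ℝ => p t + y • δp t) (δp t) x := by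
      simpa using ((hasDerivAt_id x).smul_const (δp t)).const_add (p t)
    have hB : HasDerivAt (fun y : ℝ => deriv q t + y • deriv δq t) (deriv δq t) x := by
      simpa using ((hasDerivAt_id x).smul_const (deriv δq t)).const_add (deriv q t)
    have hC : HasDerivAt (fun y : ℝ => q t + y • δq t) (δq t) x := by
      simpa using ((hasDerivAt_id x).smul_const (δq t)).const_add (q t)
    have hfd' : HasFDerivAt f (fderiv ℝ f (q t + x • δq t)) (q t + x • δq t) :=
      (hf.differentiable one_ne_zero (q t + x • δq t)).hasFDerivAt
    have hcomp : HasDerivAt (fun y => f (q t + y • δq t))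
        (fderiv ℝ f (q t + x • δq t) (δq t)) x := hfd'.comp_hasDerivAt x hC
    exact (hA.inner ℝ hB).sub (hA.inner ℝ hcomp)
  have hcontF' : Continuous fun z : ℝ × ℝ => F' z.1 z.2 := by
    have c1 : Continuous fun z : ℝ × ℝ => p z.2 + z.1 • δp z.2 :=
      (hp.continuous.comp continuous_snd).add
        (continuous_fst.smul (hδp.continuous.comp continuous_snd))
    have c2 : Continuous fun z : ℝ × ℝ => deriv q z.2 + z.1 • deriv δq z.2 :=
      (hq'.comp continuous_snd).add (continuous_fst.smul (hδq'.comp continuous_snd))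
    have c3 : Continuous fun z : ℝ × ℝ => q z.2 + z.1 • δq z.2 :=
      (hq.continuous.comp continuous_snd).add
        (continuous_fst.smul (hδq.continuous.comp continuous_snd))
    have c4 : Continuous fun z : ℝ × ℝ => fderiv ℝ f (q z.2 + z.1 • δq z.2) (δq z.2) :=
      (hfd.comp c3).clm_apply (hδq.continuous.comp continuous_snd)
    exact ((c1.inner (hδq'.comp continuous_snd)).add
        ((hδp.continuous.comp continuous_snd).inner c2)).sub
      ((c1.inner c4).add ((hδp.continuous.comp continuous_snd).inner (hfc.comp c3)))
  obtain ⟨C, hC⟩ := (isCompact_Icc.prod isCompact_uIcc :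
      IsCompact (Set.Icc (-1:ℝ) 1 ×ˢ Set.uIcc t₀ t₁)).exists_bound_of_continuousOn
    hcontF'.continuousOn
  have hcontFx : ∀ x : ℝ, Continuous (F x) := by
    intro x
    show Continuous fun t => ⟪p t + x • δp t, deriv q t + x • deriv δq t⟫ - ⟪p t + x • δp t, f (q t + x • δq t)⟫
    exact ((hp.continuous.add ((continuous_const : Continuous fun _ : ℝ => x).smul hδp.continuous)).inner
        (hq'.add ((continuous_const : Continuous fun _ : ℝ => x).smul hδq'))).sub
      ((hp.continuous.add ((continuous_const : Continuous fun _ : ℝ => x).smul hδp.continuous)).inner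
        (hfc.comp (hq.continuous.add ((continuous_const : Continuous fun _ : ℝ => x).smul hδq.continuous))))
  have hcontF'0 : Continuous (F' 0) := hcontF'.comp (Continuous.prodMk_right 0)
  have key := (intervalIntegral.hasDerivAt_integral_of_dominated_loc_of_deriv_le
    (F := F) (F' := F') (x₀ := (0:ℝ)) (bound := fun _ => C) (a := t₀) (b := t₁)
    (μ := volume) (ball_mem_nhds 0 one_pos)
    (Filter.Eventually.of_forall fun x => ((hcontFx x).aestronglyMeasurable).restrict)
    ((hcontFx 0).intervalIntegrable t₀ t₁)
    (hcontF'0.aestronglyMeasurable).restrict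
    (Filter.Eventually.of_forall fun t ht x hx => by
      have : (x, t) ∈ Set.Icc (-1:ℝ) 1 ×ˢ Set.uIcc t₀ t₁ := by
        constructor
        · have := mem_ball_zero_iff.mp hx
          rw [Real.norm_eq_abs, abs_lt] at this
          exact ⟨this.1.le, this.2.le⟩
        · exact uIoc_subset_uIcc ht
      exact hC (x, t) this)
    (intervalIntegrable_const)
    (Filter.Eventually.of_forall fun t ht x hx => hderiv t x)).2
  have hval : (∫ t in t₀..t₁, F' 0 t)
      = ∫ t in t₀..t₁, ((⟪p t, deriv δq t⟫ + ⟪δp t, deriv q t⟫)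
          - (⟪p t, fderiv ℝ f (q t) (δq t)⟫ + ⟪δp t, f (q t)⟫)) := by
    congr 1
    funext t
    simp [hF']
  exact hval ▸ key

/-- the Gateaux derivative of the adjoint action
`S(q,p) = ∫ (⟨p, q̇⟩ − ⟨p, f(q)⟩) dt` vanishes for all variations `(δq, δp)` with
`δq(t₀) = δq(t₁) = 0` iff `(q,p)` solves the adjoint system
`q̇ = f(q)`, `ṗ = −Df(q)ᵀ p` on `[t₀, t₁]`. -/
theorem adjoint_variational_principle {n : ℕ} (f : Euc n → Euc n) (hf : ContDiff ℝ 1 f)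
    (t₀ t₁ : ℝ) (ht : t₀ < t₁) (q p : ℝ → Euc n)
    (hq : ContDiff ℝ 1 q) (hp : ContDiff ℝ 1 p) :
    (∀ δq δp : ℝ → Euc n, ContDiff ℝ 1 δq → ContDiff ℝ 1 δp →
        δq t₀ = 0 → δq t₁ = 0 →
        deriv (fun ε : ℝ =>
          ∫ t in t₀..t₁,
            (⟪p t + ε • δp t, deriv (fun s => q s + ε • δq s) t⟫
              - ⟪p t + ε • δp t, f (q t + ε • δq t)⟫)) 0 = 0)
    ↔ (∀ t ∈ Set.Icc t₀ t₁,
        deriv q t = f (q t) ∧ deriv p t = -(jacT f (q t) (p t))) := by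
  have hq' : Continuous (deriv q) := hq.continuous_deriv le_rfl
  have hp' : Continuous (deriv p) := hp.continuous_deriv le_rfl
  have hfd : Continuous (fderiv ℝ f) := hf.continuous_fderiv one_ne_zero
  have hderivS : ∀ (δq δp : ℝ → Euc n), ContDiff ℝ 1 δq → ContDiff ℝ 1 δp →
      deriv (fun ε : ℝ =>
        ∫ t in t₀..t₁,
          (⟪p t + ε • δp t, deriv (fun s => q s + ε • δq s) t⟫
            - ⟪p t + ε • δp t, f (q t + ε • δq t)⟫)) 0
      = ∫ t in t₀..t₁, ((⟪p t, deriv δq t⟫ + ⟪δp t, deriv q t⟫)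
          - (⟪p t, fderiv ℝ f (q t) (δq t)⟫ + ⟪δp t, f (q t)⟫)) := by
    intro δq δp hδq hδp
    have hfun : (fun ε : ℝ =>
        ∫ t in t₀..t₁,
          (⟪p t + ε • δp t, deriv (fun s => q s + ε • δq s) t⟫
            - ⟪p t + ε • δp t, f (q t + ε • δq t)⟫))
        = fun ε : ℝ =>
          ∫ t in t₀..t₁,
            (⟪p t + ε • δp t, deriv q t + ε • deriv δq t⟫
              - ⟪p t + ε • δp t, f (q t + ε • δq t)⟫) := by
      funext ε
      congr 1
      funext t
      have : deriv (fun s => q s + ε • δq s) t = deriv q t + ε • deriv δq t :=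
        (((hq.differentiable one_ne_zero t).hasDerivAt).add
          (((hδq.differentiable one_ne_zero t).hasDerivAt).const_smul ε)).deriv
      rw [this]
    rw [hfun]
    exact (action_hasDerivAt f hf t₀ t₁ q p δq δp hq hp hδq hδp).deriv
  constructor
  · intro H
    have hq_eq : ∀ t ∈ Set.Icc t₀ t₁, deriv q t - f (q t) = 0 := by
      apply fund_lemma ht _ (hq'.sub (hf.continuous.comp hq.continuous))
      intro δ hδ hδ0 hδ1
      have h0 := H (fun _ => 0) δ contDiff_const hδ rfl rfl
      rw [hderivS (fun _ => 0) δ contDiff_const hδ] at h0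
      rw [← h0]
      congr 1
      funext t
      simp [inner_sub_right, real_inner_comm]
    have hjac_cont : Continuous fun t => jacT f (q t) (p t) := by
      have hadj : Continuous fun t => jacT f (q t) := by
        unfold jacT
        exact (LinearIsometryEquiv.continuous _).comp (hfd.comp hq.continuous)
      exact hadj.clm_apply hp.continuous
    have hp_eq : ∀ t ∈ Set.Icc t₀ t₁, deriv p t + jacT f (q t) (p t) = 0 := by
      apply fund_lemma ht _ (hp'.add hjac_cont)
      intro δ hδ hδ0 hδ1
      have hδ' : Continuous (deriv δ) := hδ.continuous_deriv le_rfl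
      have h0 := H δ (fun _ => 0) hδ contDiff_const hδ0 hδ1
      rw [hderivS δ (fun _ => 0) hδ contDiff_const] at h0
      have h0' : (∫ t in t₀..t₁, (⟪p t, deriv δ t⟫ - ⟪p t, fderiv ℝ f (q t) (δ t)⟫)) = 0 := by
        rw [← h0]
        congr 1
        funext t
        simp
      have hIBP : (∫ t in t₀..t₁, (⟪p t, deriv δ t⟫ + ⟪deriv p t, δ t⟫)) = 0 := by
        have := intervalIntegral.integral_eq_sub_of_hasDerivAt
          (f := fun t => ⟪p t, δ t⟫)
          (f' := fun t => ⟪p t, deriv δ t⟫ + ⟪deriv p t, δ t⟫)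
          (fun t _ => HasDerivAt.inner ℝ (hp.differentiable one_ne_zero t).hasDerivAt
            (hδ.differentiable one_ne_zero t).hasDerivAt)
          (((hp.continuous.inner hδ').add (hp'.inner hδ.continuous)).intervalIntegrable t₀ t₁)
        rw [this]
        simp [hδ0, hδ1]
      have hrw : (fun t => ⟪δ t, deriv p t + jacT f (q t) (p t)⟫)
          = fun t => (⟪p t, deriv δ t⟫ + ⟪deriv p t, δ t⟫)
              - (⟪p t, deriv δ t⟫ - ⟪p t, fderiv ℝ f (q t) (δ t)⟫) := by
        funext t
        have hadj : ⟪δ t, jacT f (q t) (p t)⟫ = ⟪p t, fderiv ℝ f (q t) (δ t)⟫ := by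
          rw [real_inner_comm]
          exact ContinuousLinearMap.adjoint_inner_left _ _ _
        rw [inner_add_right, hadj, real_inner_comm (δ t) (deriv p t)]
        ring
      show (∫ t in t₀..t₁, ⟪δ t, deriv p t + jacT f (q t) (p t)⟫) = 0
      rw [hrw, intervalIntegral.integral_sub
        (((hp.continuous.inner hδ').add (hp'.inner hδ.continuous)).intervalIntegrable t₀ t₁)
        (((hp.continuous.inner hδ').sub
          (hp.continuous.inner (((hfd.comp hq.continuous).clm_apply
            hδ.continuous)))).intervalIntegrable t₀ t₁),
        hIBP, h0']
      simp
    intro t htmem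
    exact ⟨sub_eq_zero.mp (hq_eq t htmem), eq_neg_of_add_eq_zero_left (hp_eq t htmem)⟩
  · intro H δq δp hδq hδp hb0 hb1
    have hδq' : Continuous (deriv δq) := hδq.continuous_deriv le_rfl
    rw [hderivS δq δp hδq hδp]
    have hEq : Set.EqOn
        (fun t => (⟪p t, deriv δq t⟫ + ⟪δp t, deriv q t⟫)
          - (⟪p t, fderiv ℝ f (q t) (δq t)⟫ + ⟪δp t, f (q t)⟫))
        (fun t => ⟪p t, deriv δq t⟫ + ⟪deriv p t, δq t⟫) (Set.uIcc t₀ t₁) := by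
      intro t htmem
      rw [Set.uIcc_of_le ht.le] at htmem
      obtain ⟨h1, h2⟩ := H t htmem
      have hadj : ⟪p t, fderiv ℝ f (q t) (δq t)⟫ = ⟪jacT f (q t) (p t), δq t⟫ :=
        (ContinuousLinearMap.adjoint_inner_left _ _ _).symm
      simp only
      rw [h1, hadj, h2, inner_neg_left]
      ring
    rw [intervalIntegral.integral_congr hEq,
      intervalIntegral.integral_eq_sub_of_hasDerivAt
        (f := fun t => ⟪p t, δq t⟫)
        (f' := fun t => ⟪p t, deriv δq t⟫ + ⟪deriv p t, δq t⟫)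
        (fun t _ => HasDerivAt.inner ℝ (hp.differentiable one_ne_zero t).hasDerivAt
          (hδq.differentiable one_ne_zero t).hasDerivAt)
        (((hp.continuous.inner hδq').add (hp'.inner hδq.continuous)).intervalIntegrable t₀ t₁)]
    simp [hb0, hb1]

end
end

section
/- Let f, g : ℝⁿ → ℝⁿ be continuously differentiable with vanishing Lie bracket, i.e., Df(q) g(q) − Dg(q) f(q) = 0 for all q ∈ ℝⁿ. Then for every continuously differentiable solution (q,p) : [t₀,t₁] → ℝⁿ × ℝⁿ of the adjoint system q̇ = f(q), ṗ = −Df(q)ᵀ p, the function t ↦ ⟨p(t), g(q(t))⟩ is constant on [t₀,t₁]. -/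
open scoped RealInnerProductSpace

noncomputable section

/-- if `[g,f] = 0`, then `⟨p, g(q)⟩` is conserved along solutions
of the adjoint system `q̇ = f(q)`, `ṗ = −Df(q)ᵀ p`. -/
theorem adjoint_symmetry_conservation {n : ℕ} (f g : Euc n → Euc n)
    (hf : ContDiff ℝ 1 f) (hg : ContDiff ℝ 1 g)
    (hbracket : ∀ x : Euc n, fderiv ℝ f x (g x) - fderiv ℝ g x (f x) = 0)
    (t₀ t₁ : ℝ) (q p : ℝ → Euc n)
    (hq : ContDiff ℝ 1 q) (hp : ContDiff ℝ 1 p)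
    (hqode : ∀ t ∈ Set.Icc t₀ t₁, HasDerivAt q (f (q t)) t)
    (hpode : ∀ t ∈ Set.Icc t₀ t₁, HasDerivAt p (-(jacT f (q t) (p t))) t) :
    ∀ s ∈ Set.Icc t₀ t₁, ∀ t ∈ Set.Icc t₀ t₁, ⟪p s, g (q s)⟫ = ⟪p t, g (q t)⟫ := by
  have key : ∀ t ∈ Set.Icc t₀ t₁,
      HasDerivAt (fun t => ⟪p t, g (q t)⟫) 0 t := by
    intro t ht
    have hgq : HasDerivAt (fun t => g (q t)) (fderiv ℝ g (q t) (f (q t))) t :=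
      ((hg.differentiable one_ne_zero (q t)).hasFDerivAt).comp_hasDerivAt t (hqode t ht)
    have h := (hpode t ht).inner ℝ hgq
    have e1 : ⟪jacT f (q t) (p t), g (q t)⟫ = ⟪p t, fderiv ℝ f (q t) (g (q t))⟫ := by
      simpa [jacT] using ContinuousLinearMap.adjoint_inner_left (fderiv ℝ f (q t)) (g (q t)) (p t)
    have e2 : fderiv ℝ g (q t) (f (q t)) = fderiv ℝ f (q t) (g (q t)) :=
      (sub_eq_zero.mp (hbracket (q t))).symm
    have e3 : ⟪p t, fderiv ℝ g (q t) (f (q t))⟫ + ⟪-(jacT f (q t) (p t)), g (q t)⟫ = 0 := by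
      rw [e2, inner_neg_left, e1]; ring
    exact e3 ▸ h
  have hconst := constant_of_has_deriv_right_zero
    (f := fun t => ⟪p t, g (q t)⟫) (a := t₀) (b := t₁)
    (fun x hx => (key x hx).continuousAt.continuousWithinAt)
    (fun x hx => ((key x (Set.mem_Icc_of_Ico hx)).hasDerivWithinAt))
  intro s hs t ht
  exact (hconst s hs).trans (hconst t ht).symm

end
end

section
/- Let f, g : ℝⁿ → ℝⁿ and L : ℝⁿ → ℝ be continuously differentiable such that Df(q) g(q) − Dg(q) f(q) = 0 and ⟨∇L(q), g(q)⟩ = 0 for all q ∈ ℝⁿ. Then for every continuously differentiable solution (q,p) : [t₀,t₁] → ℝⁿ × ℝⁿ of the augmented adjoint system q̇ = f(q), ṗ = −Df(q)ᵀ p − ∇L(q), the function t ↦ ⟨p(t), g(q(t))⟩ is constant on [t₀,t₁]. -/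
open scoped RealInnerProductSpace

noncomputable section

/-- if `[g,f] = 0` and `⟨∇L, g⟩ = 0`, then `⟨p, g(q)⟩` is conserved
along solutions of the augmented adjoint system `q̇ = f(q)`, `ṗ = −Df(q)ᵀ p − ∇L(q)`. -/
theorem augmented_adjoint_symmetry_conservation {n : ℕ} (f g : Euc n → Euc n) (L : Euc n → ℝ)
    (hf : ContDiff ℝ 1 f) (hg : ContDiff ℝ 1 g) (hL : ContDiff ℝ 1 L)
    (hbracket : ∀ x : Euc n, fderiv ℝ f x (g x) - fderiv ℝ g x (f x) = 0)
    (hLinv : ∀ x : Euc n, ⟪gradient L x, g x⟫ = 0)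
    (t₀ t₁ : ℝ) (q p : ℝ → Euc n)
    (hq : ContDiff ℝ 1 q) (hp : ContDiff ℝ 1 p)
    (hqode : ∀ t ∈ Set.Icc t₀ t₁, HasDerivAt q (f (q t)) t)
    (hpode : ∀ t ∈ Set.Icc t₀ t₁,
      HasDerivAt p (-(jacT f (q t) (p t)) - gradient L (q t)) t) :
    ∀ s ∈ Set.Icc t₀ t₁, ∀ t ∈ Set.Icc t₀ t₁, ⟪p s, g (q s)⟫ = ⟪p t, g (q t)⟫ := by
  have key : ∀ t ∈ Set.Icc t₀ t₁, HasDerivAt (fun t => ⟪p t, g (q t)⟫) 0 t := by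
    intro t ht
    have hgq : HasDerivAt (fun t => g (q t)) (fderiv ℝ g (q t) (f (q t))) t :=
      (hg.differentiable one_ne_zero (q t)).hasFDerivAt.comp_hasDerivAt t (hqode t ht)
    have h := (hpode t ht).inner ℝ hgq
    refine h.congr_deriv ?_
    have hb' : fderiv ℝ g (q t) (f (q t)) = fderiv ℝ f (q t) (g (q t)) :=
      (sub_eq_zero.mp (hbracket (q t))).symm
    rw [hb']
    simp only [jacT, inner_sub_left, inner_neg_left,
      ContinuousLinearMap.adjoint_inner_left, hLinv]
    ring
  have hcont : ContinuousOn (fun t => ⟪p t, g (q t)⟫) (Set.Icc t₀ t₁) :=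
    (Continuous.inner hp.continuous (hg.continuous.comp hq.continuous)).continuousOn
  have hconst : ∀ x ∈ Set.Icc t₀ t₁,
      ⟪p x, g (q x)⟫ = ⟪p t₀, g (q t₀)⟫ := by
    intro x hx
    exact constant_of_has_deriv_right_zero hcont
      (fun y hy => ((key y ⟨hy.1, le_of_lt hy.2⟩).hasDerivWithinAt)) x hx
  intro s hs t ht
  rw [hconst s hs, hconst t ht]

end
end

section
/- Let f : ℝⁿ → ℝⁿ be continuously differentiable. Suppose q₀, q₁, p₀, p₁ ∈ ℝⁿ and internal stages Qⁱ, Pⁱ ∈ ℝⁿ (i = 1,…,s) satisfy the symplectic partitioned Runge–Kutta equations: q₁ = q₀ + Δt·Σᵢ bᵢ f(Qⁱ); Qⁱ = q₀ + Δt·Σⱼ aᵢⱼ f(Qʲ); p₁ = p₀ − Δt·Σᵢ bᵢ Df(Qⁱ)ᵀ Pⁱ; Pⁱ = p₀ − Δt·Σⱼ ãᵢⱼ Df(Qʲ)ᵀ Pʲ. Suppose further that δq₀, δq₁, δQⁱ ∈ ℝⁿ satisfy the discrete variational equations δq₁ = δq₀ + Δt·Σᵢ bᵢ Df(Qⁱ)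 δQⁱ and δQⁱ = δq₀ + Δt·Σⱼ aᵢⱼ Df(Qʲ) δQʲ. Then ⟨p₁, δq₁⟩ = ⟨p₀, δq₀⟩. -/
open scoped RealInnerProductSpace

noncomputable section

/-- the symplectic partitioned Runge–Kutta discretization of the adjoint
ODE system preserves the discrete quadratic invariant: `⟨p₁, δq₁⟩ = ⟨p₀, δq₀⟩`. -/
theorem discrete_adjoint_quadratic_invariant {n s : ℕ} (hs : 1 ≤ s)
    (f : Euc n → Euc n) (hf : ContDiff ℝ 1 f)
    (Δt : ℝ) (hΔt : 0 < Δt)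
    (a a' : Fin s → Fin s → ℝ) (b : Fin s → ℝ)
    (hsym : ∀ i j, b i * a' i j + b j * a j i = b i * b j)
    (q₀ q₁ p₀ p₁ : Euc n) (Q P : Fin s → Euc n)
    (hq1 : q₁ = q₀ + Δt • ∑ i, b i • f (Q i))
    (hQ : ∀ i, Q i = q₀ + Δt • ∑ j, a i j • f (Q j))
    (hp1 : p₁ = p₀ - Δt • ∑ i, b i • jacT f (Q i) (P i))
    (hP : ∀ i, P i = p₀ - Δt • ∑ j, a' i j • jacT f (Q j) (P j))
    (δq₀ δq₁ : Euc n) (δQ : Fin s → Euc n)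
    (hδq1 : δq₁ = δq₀ + Δt • ∑ i, b i • fderiv ℝ f (Q i) (δQ i))
    (hδQ : ∀ i, δQ i = δq₀ + Δt • ∑ j, a i j • fderiv ℝ f (Q j) (δQ j)) :
    ⟪p₁, δq₁⟫ = ⟪p₀, δq₀⟫ := by
  set k : Fin s → Euc n := fun j => fderiv ℝ f (Q j) (δQ j) with hk
  set l : Fin s → Euc n := fun i => jacT f (Q i) (P i) with hl
  set X : Fin s → Fin s → ℝ := fun i j => ⟪l i, k j⟫ with hX
  have adj : ∀ i, ⟪l i, δQ i⟫ = ⟪P i, k i⟫ := fun i =>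
    ContinuousLinearMap.adjoint_inner_left _ _ _
  have hp0 : ∀ j, p₀ = P j + Δt • ∑ i, a' j i • l i := by
    intro j; rw [hP j]; abel
  have hq0 : ∀ i, δq₀ = δQ i - Δt • ∑ j, a i j • k j := by
    intro i; rw [hδQ i]; abel
  have e1 : ∀ j, ⟪p₀, k j⟫ = ⟪P j, k j⟫ + Δt * ∑ i, a' j i * X i j := by
    intro j
    rw [hp0 j, inner_add_left, real_inner_smul_left, sum_inner]
    simp only [real_inner_smul_left, hX]
  have e2 : ∀ i, ⟪l i, δq₀⟫ = ⟪P i, k i⟫ - Δt * ∑ j, a i j * X i j := by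
    intro i
    rw [hq0 i, inner_sub_right, real_inner_smul_right, inner_sum, adj i]
    simp only [real_inner_smul_right, hX]
  have main : ⟪p₁, δq₁⟫ = ⟪p₀, δq₀⟫ + Δt * ∑ j, b j * ⟪p₀, k j⟫
      - Δt * ∑ i, b i * (⟪l i, δq₀⟫ + Δt * ∑ j, b j * X i j) := by
    rw [hp1, hδq1]
    simp only [inner_sub_left, inner_add_right, real_inner_smul_left,
      real_inner_smul_right, sum_inner, inner_sum, hX, hk, hl, mul_add,
      Finset.mul_sum, Finset.sum_add_distrib]
    ring_nf
    congr 1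
    rw [Finset.sum_comm]
    exact Finset.sum_congr rfl fun _ _ => Finset.sum_congr rfl fun _ _ => by ring
  rw [main]
  simp only [e1, e2]
  have final : ∑ j, b j * (⟪P j, k j⟫ + Δt * ∑ i, a' j i * X i j)
      = ∑ i, b i * ((⟪P i, k i⟫ - Δt * ∑ j, a i j * X i j) + Δt * ∑ j, b j * X i j) := by
    simp only [mul_add, mul_sub, Finset.mul_sum, Finset.sum_add_distrib,
      Finset.sum_sub_distrib]
    rw [Finset.sum_comm (s := Finset.univ) (t := Finset.univ)
      (f := fun j i => b j * (Δt * (a' j i * X i j)))]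
    have : ∀ i j, b j * (Δt * (a' j i * X i j))
        = b i * (Δt * (b j * X i j)) - b i * (Δt * (a i j * X i j)) := by
      intro i j
      linear_combination Δt * X i j * hsym j i
    simp only [this, Finset.sum_sub_distrib]
    ring
  rw [final]
  ring

end
end

section
/- Let f : ℝⁿ → ℝⁿ and L : ℝⁿ → ℝ be continuously differentiable. Suppose q₀, q₁, p₀, p₁ ∈ ℝⁿ and internal stages Qⁱ, Pⁱ ∈ ℝⁿ (i = 1,…,s) satisfy: q₁ = q₀ + Δt·Σᵢ bᵢ f(Qⁱ); Qⁱ = q₀ + Δt·Σⱼ aᵢⱼ f(Qʲ); p₁ = p₀ − Δt·Σᵢ bᵢ ( Df(Qⁱ)ᵀ Pⁱ + ∇L(Qⁱ) ); Pⁱ = p₀ − Δt·Σⱼ ãᵢⱼ ( Df(Qʲ)ᵀ Pʲ + ∇L(Qʲ) ). Suppose further that δq₀, δq₁, δQⁱ ∈ ℝⁿ satisfy the discrete variational equations δq₁ = δq₀ + Δt·Σᵢ bᵢ Df(Qⁱ) δQⁱ and δQⁱ = δq₀ + Δt·Σⱼ aᵢⱼ Df(Qʲ) δQʲ. Then ⟨p₁,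 δq₁⟩ = ⟨p₀, δq₀⟩ − Δt·Σᵢ bᵢ ⟨∇L(Qⁱ), δQⁱ⟩. -/
open scoped RealInnerProductSpace

noncomputable section

/-- the symplectic partitioned Runge–Kutta discretization of the augmented
adjoint ODE system satisfies the discrete identity
`⟨p₁, δq₁⟩ = ⟨p₀, δq₀⟩ − Δt Σᵢ bᵢ ⟨∇L(Qⁱ), δQⁱ⟩`. -/
theorem discrete_augmented_adjoint_quadratic_identity {n s : ℕ} (hs : 1 ≤ s)
    (f : Euc n → Euc n) (L : Euc n → ℝ)
    (hf : ContDiff ℝ 1 f) (hL : ContDiff ℝ 1 L)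
    (Δt : ℝ) (hΔt : 0 < Δt)
    (a a' : Fin s → Fin s → ℝ) (b : Fin s → ℝ)
    (hsym : ∀ i j, b i * a' i j + b j * a j i = b i * b j)
    (q₀ q₁ p₀ p₁ : Euc n) (Q P : Fin s → Euc n)
    (hq1 : q₁ = q₀ + Δt • ∑ i, b i • f (Q i))
    (hQ : ∀ i, Q i = q₀ + Δt • ∑ j, a i j • f (Q j))
    (hp1 : p₁ = p₀ - Δt • ∑ i, b i • (jacT f (Q i) (P i) + gradient L (Q i)))
    (hP : ∀ i, P i = p₀ - Δt • ∑ j, a' i j • (jacT f (Q j) (P j) + gradient L (Q j)))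
    (δq₀ δq₁ : Euc n) (δQ : Fin s → Euc n)
    (hδq1 : δq₁ = δq₀ + Δt • ∑ i, b i • fderiv ℝ f (Q i) (δQ i))
    (hδQ : ∀ i, δQ i = δq₀ + Δt • ∑ j, a i j • fderiv ℝ f (Q j) (δQ j)) :
    ⟪p₁, δq₁⟫ = ⟪p₀, δq₀⟫ - Δt * ∑ i, b i * ⟪gradient L (Q i), δQ i⟫ := by
  classical
  set g : Fin s → Euc n := fun i => jacT f (Q i) (P i) + gradient L (Q i) with hg
  set v : Fin s → Euc n := fun i => fderiv ℝ f (Q i) (δQ i) with hv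
  have hp1' : p₁ = p₀ - Δt • ∑ i, b i • g i := hp1
  have hP' : ∀ i, P i = p₀ - Δt • ∑ j, a' i j • g j := hP
  have hδq1' : δq₁ = δq₀ + Δt • ∑ i, b i • v i := hδq1
  have hδQ' : ∀ i, δQ i = δq₀ + Δt • ∑ j, a i j • v j := hδQ
  have hC : ∀ i, ⟪g i, δQ i⟫ = ⟪P i, v i⟫ + ⟪gradient L (Q i), δQ i⟫ := by
    intro i
    simp only [hg, hv, inner_add_left, jacT, ContinuousLinearMap.adjoint_inner_left]
  have h2 : ∀ i, ⟪g i, δQ i⟫ = ⟪g i, δq₀⟫ + Δt * ∑ j, a i j * ⟪g i, v j⟫ := by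
    intro i
    conv_lhs => rw [hδQ' i]
    simp only [inner_add_right, real_inner_smul_right, inner_sum]
  have h4 : ∀ i, ⟪P i, v i⟫ = ⟪p₀, v i⟫ - Δt * ∑ j, a' i j * ⟪g j, v i⟫ := by
    intro i
    conv_lhs => rw [hP' i]
    simp only [inner_sub_left, real_inner_smul_left, sum_inner]
  have e1 : ∀ i, b i * ⟪g i, δq₀⟫
      = b i * ⟪p₀, v i⟫ + b i * ⟪gradient L (Q i), δQ i⟫
        - Δt * ∑ j, (b i * (a' i j) * ⟪g j, v i⟫ + b i * (a i j) * ⟪g i, v j⟫) := by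
    intro i
    have h := h2 i
    rw [hC i, h4 i] at h
    have hs1 : ∑ j, (b i * (a' i j) * ⟪g j, v i⟫ + b i * (a i j) * ⟪g i, v j⟫)
        = b i * (∑ j, a' i j * ⟪g j, v i⟫) + b i * (∑ j, a i j * ⟪g i, v j⟫) := by
      rw [Finset.sum_add_distrib, Finset.mul_sum, Finset.mul_sum]
      congr 1 <;> exact Finset.sum_congr rfl (fun j _ => by ring)
    rw [hs1]
    linear_combination (-(b i)) * h
  have dsum : ∑ i, ∑ j, (b i * (a' i j) * ⟪g j, v i⟫ + b i * (a i j) * ⟪g i, v j⟫)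
      = ∑ i, ∑ j, b i * b j * ⟪g i, v j⟫ := by
    have step : ∑ i, ∑ j, (b i * (a' i j) * ⟪g j, v i⟫ + b i * (a i j) * ⟪g i, v j⟫)
        = (∑ i, ∑ j, b i * (a' i j) * ⟪g j, v i⟫) + ∑ i, ∑ j, b i * (a i j) * ⟪g i, v j⟫ := by
      rw [← Finset.sum_add_distrib]
      exact Finset.sum_congr rfl (fun i _ => by rw [Finset.sum_add_distrib])
    rw [step, Finset.sum_comm (f := fun i j => b i * (a' i j) * ⟪g j, v i⟫),
      ← Finset.sum_add_distrib]
    refine Finset.sum_congr rfl (fun i _ => ?_)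
    rw [← Finset.sum_add_distrib]
    refine Finset.sum_congr rfl (fun j _ => ?_)
    linear_combination (⟪g i, v j⟫ : ℝ) * hsym j i
  have key : ∑ i, b i * ⟪g i, δq₀⟫
      = ∑ i, b i * ⟪p₀, v i⟫ + ∑ i, b i * ⟪gradient L (Q i), δQ i⟫
        - Δt * ∑ i, ∑ j, b i * b j * ⟪g i, v j⟫ := by
    rw [Finset.sum_congr rfl (fun i _ => e1 i), Finset.sum_sub_distrib,
      Finset.sum_add_distrib, ← Finset.mul_sum, dsum]
  have expand : ⟪p₁, δq₁⟫
      = ⟪p₀, δq₀⟫ + Δt * (∑ i, b i * ⟪p₀, v i⟫) - Δt * (∑ i, b i * ⟪g i, δq₀⟫)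
        - Δt * (Δt * ∑ i, ∑ j, b i * b j * ⟪g i, v j⟫) := by
    rw [hp1', hδq1']
    simp only [inner_sub_left, inner_add_right, real_inner_smul_left, real_inner_smul_right,
      sum_inner, inner_sum]
    have hd : ∑ i, b i * (Δt * ∑ j, b j * ⟪g j, v i⟫)
        = Δt * ∑ i, ∑ j, b i * b j * ⟪g i, v j⟫ := by
      calc ∑ i, b i * (Δt * ∑ j, b j * ⟪g j, v i⟫)
          = ∑ i, ∑ j, Δt * (b j * b i * ⟪g j, v i⟫) := by
            refine Finset.sum_congr rfl (fun i _ => ?_)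
            rw [Finset.mul_sum, Finset.mul_sum]
            exact Finset.sum_congr rfl (fun j _ => by ring)
        _ = ∑ j, ∑ i, Δt * (b j * b i * ⟪g j, v i⟫) := Finset.sum_comm
        _ = Δt * ∑ i, ∑ j, b i * b j * ⟪g i, v j⟫ := by
            rw [Finset.mul_sum]
            refine Finset.sum_congr rfl (fun i _ => ?_)
            rw [Finset.mul_sum]
    rw [hd]
    ring
  rw [expand, key]
  ring

end
end
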